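/- arXiv:2507.12244 — 7 statements merged into one kernel-verified Lean document; each statement's English description precedes it below -/
import Mathlib

section
/- Let G' be a finite set of pairwise non-isomorphic finite simple graphs. For H ∈ G', let f_H : G' → ℚ be the function G ↦ #Ind(H, G). Then the functions {f_H : H ∈ G'} are linearly independent over ℚ. -/
open SimpleGraph

/-- The number of induced copies of `H` in `G`. -/
noncomputable def indCount {α β : Type*} (H : SimpleGraph α) (G : SimpleGraph β) : ℕ :=
  Nat.card {s : Finset β // Nonempty (H ≃g G.induce (s : Set β))}

lemma card_of_iso {m p : ℕ} {H : SimpleGraph (Fin m)} {G : SimpleGraph (Fin p)}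
    {s : Finset (Fin p)} (e : H ≃g G.induce (s : Set (Fin p))) : m = s.card := by
  have := Nat.card_congr e.toEquiv
  simpa [Nat.card_eq_fintype_card, Nat.card_coe_set_eq, Set.ncard_coe_finset] using this

lemma indCount_eq_zero {m p : ℕ} {H : SimpleGraph (Fin m)} {G : SimpleGraph (Fin p)}
    (h : ∀ s : Finset (Fin p), IsEmpty (H ≃g G.induce (s : Set (Fin p)))) :
    indCount H G = 0 := by
  have : IsEmpty {s : Finset (Fin p) // Nonempty (H ≃g G.induce (s : Set (Fin p)))} := by
    constructor
    rintro ⟨s, ⟨e⟩⟩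
    exact (h s).elim e
  simp [indCount, Nat.card_of_isEmpty]

lemma indCount_self_ne_zero {m : ℕ} (G : SimpleGraph (Fin m)) : indCount G G ≠ 0 := by
  have hne : Nonempty {s : Finset (Fin m) // Nonempty (G ≃g G.induce ((s : Finset (Fin m)) : Set (Fin m)))} := by
    refine ⟨⟨Finset.univ, ⟨?_⟩⟩⟩
    have h : ((Finset.univ : Finset (Fin m)) : Set (Fin m)) = Set.univ := Finset.coe_univ
    rw [h]
    exact (induceUnivIso G).symm
  exact (Nat.card_pos).ne'

/-- For a finite family `H` of pairwise non-isomorphic finite graphs, the functions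
`f_{H i} : G ↦ #Ind(H i, G)` (restricted to the family itself) are linearly independent
over `ℚ`. -/
theorem stmt2 {ι : Type*} [Fintype ι] (n : ι → ℕ) (H : ∀ i, SimpleGraph (Fin (n i)))
    (hni : ∀ i j, i ≠ j → IsEmpty (H i ≃g H j)) :
    LinearIndependent ℚ (fun i : ι => (fun j : ι => (indCount (H i) (H j) : ℚ))) := by
  rw [Fintype.linearIndependent_iff]
  intro g hg
  by_contra hc
  push_neg at hc
  obtain ⟨i0, hi0⟩ := hc
  classical
  set T : Finset ι := Finset.univ.filter (fun i => g i ≠ 0) with hT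
  have hTne : T.Nonempty := ⟨i0, by simp [hT, hi0]⟩
  obtain ⟨i, hiT, hmin⟩ := T.exists_min_image n hTne
  have hgi : g i ≠ 0 := by simpa [hT] using hiT
  have hsum := congrFun hg i
  simp only [Finset.sum_apply, Pi.smul_apply, smul_eq_mul, Pi.zero_apply] at hsum
  rw [Finset.sum_eq_single i (fun k _ hki => ?_) (fun h => absurd (Finset.mem_univ i) h)] at hsum
  · have hc0 : (indCount (H i) (H i) : ℚ) ≠ 0 := by
      exact_mod_cast Nat.cast_ne_zero.mpr (indCount_self_ne_zero (H i))
    exact hgi (by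
      rcases mul_eq_zero.mp hsum with h | h
      · exact h
      · exact absurd h hc0)
  · by_cases hgk : g k = 0
    · simp [hgk]
    · have hkT : k ∈ T := by simp [hT, hgk]
      have hle : n i ≤ n k := hmin k hkT
      have hz : indCount (H k) (H i) = 0 := by
        apply indCount_eq_zero
        intro s
        constructor
        intro e
        have hcard : n k = s.card := card_of_iso e
        have hcle : s.card ≤ n i := by
          simpa using Finset.card_le_univ s
        have heq : s.card = n i := le_antisymm (by omega) (by omega)
        have hsu : s = Finset.univ := Finset.eq_univ_of_card s (by simpa using heq)
        subst hsu
        have h : ((Finset.univ : Finset (Fin (n i))) : Set (Fin (n i))) = Set.univ :=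
          Finset.coe_univ
        rw [h] at e
        exact (hni k i hki).elim (e.trans (induceUnivIso (H i)))
      simp [hz]
end

section
/- If a graph motif parameter φ(G) = Σ_i α_i · #Ind(H_i, G) with pairwise non-isomorphic patterns H_i has some non-integer rational coefficient α_j, and H is a pattern with non-integer coefficient of minimal vertex count among such patterns, then φ(H) is not an integer. -/
open SimpleGraph

lemma indCount_card {m k : ℕ} {H : SimpleGraph (Fin m)} {G : SimpleGraph (Fin k)}
    {s : Finset (Fin k)} (e : H ≃g G.induce (s : Set (Fin k))) : s.card = m := by
  have := Nat.card_congr e.toEquiv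
  simpa [Nat.card_coe_set_eq, Set.ncard_coe_finset] using this.symm

noncomputable def iso_induce_univ {k : ℕ} (G : SimpleGraph (Fin k)) :
    G.induce ((Finset.univ : Finset (Fin k)) : Set (Fin k)) ≃g G := by
  rw [Finset.coe_univ]; exact induceUnivIso G

lemma indCount_self {m : ℕ} (H : SimpleGraph (Fin m)) : indCount H H = 1 := by
  rw [indCount, Nat.card_eq_one_iff_unique]
  constructor
  · constructor
    rintro ⟨s, ⟨e⟩⟩ ⟨t, ⟨f⟩⟩
    have hs : s = Finset.univ := Finset.eq_univ_of_card _ (by simp [indCount_card e])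
    have ht : t = Finset.univ := Finset.eq_univ_of_card _ (by simp [indCount_card f])
    simp [hs, ht]
  · exact ⟨⟨Finset.univ, ⟨(iso_induce_univ H).symm⟩⟩⟩

lemma indCount_zero {m k : ℕ} (H : SimpleGraph (Fin m)) (G : SimpleGraph (Fin k))
    (hle : k ≤ m) (hni : IsEmpty (H ≃g G)) : indCount H G = 0 := by
  rw [indCount, Nat.card_eq_zero]
  left
  constructor
  rintro ⟨s, ⟨e⟩⟩
  have hc : s.card = m := indCount_card e
  have hcle : s.card ≤ k := by simpa using Finset.card_le_card (Finset.subset_univ s)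
  have hm : m = k := le_antisymm (hc ▸ hcle) hle
  have hs : s = Finset.univ := Finset.eq_univ_of_card _ (by simp only [Fintype.card_fin] at hc ⊢; omega)
  subst hs
  exact hni.false (e.trans (iso_induce_univ G))

/-- If a graph motif parameter `φ = Σ αᵢ · #Ind(Hᵢ, ·)` with pairwise non-isomorphic
patterns has a non-integer coefficient, and `H j` is a pattern with non-integer
coefficient of minimal vertex count among such patterns, then `φ(H j)` is not an
integer. -/
theorem stmt4 {s : ℕ} (n : Fin s → ℕ) (H : ∀ i, SimpleGraph (Fin (n i))) (α : Fin s → ℚ)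
    (hni : ∀ i j, i ≠ j → IsEmpty (H i ≃g H j))
    (j : Fin s) (hj : ¬∃ z : ℤ, α j = (z : ℚ))
    (hmin : ∀ i, (¬∃ z : ℤ, α i = (z : ℚ)) → n j ≤ n i) :
    ¬∃ z : ℤ, ∑ i, α i * (indCount (H i) (H j) : ℚ) = (z : ℚ) := by
  rintro ⟨z, hz⟩
  have hsplit : ∑ i, α i * (indCount (H i) (H j) : ℚ)
      = α j + ∑ i ∈ Finset.univ.erase j, α i * (indCount (H i) (H j) : ℚ) := by
    rw [← Finset.add_sum_erase _ _ (Finset.mem_univ j), indCount_self, Nat.cast_one, mul_one]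
  have hrest : ∑ i ∈ Finset.univ.erase j, α i * (indCount (H i) (H j) : ℚ)
      ∈ (Int.castRingHom ℚ).range := by
    apply Subring.sum_mem
    intro i hi
    have hij : i ≠ j := Finset.ne_of_mem_erase hi
    by_cases hint : ∃ w : ℤ, α i = (w : ℚ)
    · obtain ⟨w, hw⟩ := hint
      exact ⟨w * (indCount (H i) (H j) : ℤ), by simp [hw]⟩
    · rw [indCount_zero (H i) (H j) (hmin i hint) (hni i j hij)]
      exact ⟨0, by simp⟩
  obtain ⟨w, hw⟩ := hrest
  simp only [eq_intCast] at hw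
  apply hj
  have h2 := hsplit ▸ hz
  exact ⟨z - w, by push_cast; linarith⟩
end

section
/- Let C be a connected finite simple graph with at least 4 vertices. Then #Ind(K3, C) ≤ #Ind(Paw, C) + 2·#Ind(Diamond, C) + 4·#Ind(K4, C), where Paw is the triangle with a pendant edge, Diamond is K4 minus an edge, and K3 and K4 are complete graphs on 3 and 4 vertices respectively. -/
open SimpleGraph

/-- The paw: a triangle `{0,1,2}` with the pendant edge `{0,3}`. -/
def pawGraph : SimpleGraph (Fin 4) :=
  SimpleGraph.fromRel (fun a b =>
    (a = 0 ∧ b = 1) ∨ (a = 0 ∧ b = 2) ∨ (a = 1 ∧ b = 2) ∨ (a = 0 ∧ b = 3))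

/-- The diamond: `K₄` minus the edge `{2,3}`. -/
def diamondGraph : SimpleGraph (Fin 4) :=
  SimpleGraph.fromRel (fun a b =>
    (a = 0 ∧ b = 1) ∨ (a = 0 ∧ b = 2) ∨ (a = 1 ∧ b = 2) ∨ (a = 0 ∧ b = 3) ∨ (a = 1 ∧ b = 3))

namespace Stmt7Aux

instance : DecidableRel pawGraph.Adj := fun a b =>
  decidable_of_iff _ (SimpleGraph.fromRel_adj _ a b).symm

instance : DecidableRel diamondGraph.Adj := fun a b =>
  decidable_of_iff _ (SimpleGraph.fromRel_adj _ a b).symm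

variable {V : Type*} {C : SimpleGraph V}

/-- pairwise-adjacent 3-element subset. -/
def isTri (C : SimpleGraph V) (t : Finset V) : Prop :=
  t.card = 3 ∧ ∀ a ∈ t, ∀ b ∈ t, a ≠ b → C.Adj a b

lemma iso_of_map {n : ℕ} (H : SimpleGraph (Fin n)) (f : Fin n → V) (hf : Function.Injective f)
    (s : Finset V) (hs : (s : Set V) = Set.range f)
    (h : ∀ i j, H.Adj i j ↔ C.Adj (f i) (f j)) :
    Nonempty (H ≃g C.induce (s : Set V)) := by
  refine ⟨⟨(Equiv.ofInjective f hf).trans (Equiv.setCongr hs.symm), ?_⟩⟩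
  intro i j
  simp [SimpleGraph.induce, SimpleGraph.comap_adj, Equiv.setCongr_apply,
    Function.Embedding.coe_subtype, h]
  exact Iff.rfl

lemma card_of_iso {n : ℕ} {H : SimpleGraph (Fin n)} {s : Finset V}
    (h : Nonempty (H ≃g C.induce (s : Set V))) : s.card = n := by
  obtain ⟨e⟩ := h
  have := Nat.card_congr e.toEquiv
  simpa [Nat.card_coe_set_eq, Set.ncard_coe_finset] using this.symm

lemma adj_of_iso_mem {n : ℕ} {H : SimpleGraph (Fin n)} {t : Finset V}
    (e : H ≃g C.induce (t : Set V)) {a b : V} (ha : a ∈ t) (hb : b ∈ t) (hab : a ≠ b)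
    (hadj : ∀ i j : Fin n, i ≠ j → H.Adj i j) : C.Adj a b := by
  have h1 : e.symm ⟨a, ha⟩ ≠ e.symm ⟨b, hb⟩ := by
    intro hh
    exact hab (Subtype.mk_eq_mk.mp (e.symm.injective hh))
  have h2 := e.map_adj_iff.mpr (hadj _ _ h1)
  have ea : e (e.symm ⟨a, ha⟩) = ⟨a, ha⟩ := e.apply_symm_apply _
  have eb : e (e.symm ⟨b, hb⟩) = ⟨b, hb⟩ := e.apply_symm_apply _
  rw [ea, eb] at h2
  simpa [SimpleGraph.comap_adj, Function.Embedding.coe_subtype] using h2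

lemma isTri_of_iso {t : Finset V}
    (h : Nonempty ((⊤ : SimpleGraph (Fin 3)) ≃g C.induce (t : Set V))) : isTri C t := by
  obtain ⟨e⟩ := h
  exact ⟨card_of_iso ⟨e⟩, fun a ha b hb hab =>
    adj_of_iso_mem e ha hb hab (fun i j hij => hij)⟩

lemma tri_count_le [DecidableEq V] [DecidablePred (isTri C)]
    {H : SimpleGraph (Fin 4)} [DecidableRel H.Adj] {s : Finset V}
    (e : H ≃g C.induce (s : Set V)) {k : ℕ}
    (hk : ((Finset.univ : Finset (Finset (Fin 4))).filter
      (fun u => u.card = 3 ∧ ∀ i ∈ u, ∀ j ∈ u, i ≠ j → H.Adj i j)).card ≤ k) :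
    ((s.powerset).filter (isTri C)).card ≤ k := by
  set g : Finset V → Finset (Fin 4) :=
    fun t => Finset.univ.filter (fun i : Fin 4 => (e i : V) ∈ t) with hg
  have hcoe_inj : Function.Injective (fun i : Fin 4 => (e i : V)) := by
    intro i j hij
    exact e.injective (Subtype.coe_injective hij)
  have key : ∀ t ∈ s.powerset, (g t).image (fun i => (e i : V)) = t := by
    intro t ht
    rw [Finset.mem_powerset] at ht
    ext a
    simp only [hg, Finset.mem_image, Finset.mem_filter, Finset.mem_univ, true_and]
    constructor
    · rintro ⟨i, hi, rfl⟩; exact hi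
    · intro ha
      have hesa : e (e.symm ⟨a, ht ha⟩) = ⟨a, ht ha⟩ := e.apply_symm_apply _
      exact ⟨e.symm ⟨a, ht ha⟩, by rw [hesa]; exact ha, by rw [hesa]⟩
  refine le_trans (Finset.card_le_card_of_injOn g ?_ ?_) hk
  · intro t ht
    have ht' := ht
    rw [Finset.mem_coe, Finset.mem_filter, Finset.mem_powerset] at ht'
    have hts := ht'.1
    have htc := ht'.2.1
    have hadj := ht'.2.2
    rw [Finset.mem_coe, Finset.mem_filter]
    refine ⟨Finset.mem_univ _, ?_, ?_⟩
    · have := key t (Finset.mem_powerset.mpr hts)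
      have hcard : ((g t).image (fun i => (e i : V))).card = (g t).card :=
        Finset.card_image_of_injective _ hcoe_inj
      rw [this] at hcard
      rw [← hcard, htc]
    · intro i hi j hj hij
      simp only [hg, Finset.mem_filter, Finset.mem_univ, true_and] at hi hj
      have hne : (e i : V) ≠ (e j : V) := fun hh => hij (hcoe_inj hh)
      have hC : C.Adj (e i : V) (e j : V) := hadj _ hi _ hj hne
      have : (C.induce (s : Set V)).Adj (e i) (e j) := by
        simpa [SimpleGraph.comap_adj, Function.Embedding.coe_subtype] using hC
      exact e.map_adj_iff.mp this
  · intro t1 h1 t2 h2 hgt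
    have k1 := key t1 (Finset.mem_of_mem_filter _ h1)
    have k2 := key t2 (Finset.mem_of_mem_filter _ h2)
    rw [← k1, ← k2, hgt]

lemma inj4 {a b c v : V} (hab : a ≠ b) (hac : a ≠ c) (hav : a ≠ v) (hbc : b ≠ c)
    (hbv : b ≠ v) (hcv : c ≠ v) : Function.Injective ![a, b, c, v] := by
  intro i j h
  fin_cases i <;> fin_cases j <;> simp_all

lemma range4 [DecidableEq V] {a b c v : V} :
    (({a, b, c, v} : Finset V) : Set V) = Set.range ![a, b, c, v] := by
  ext x; simp [Matrix.range_cons, Matrix.range_empty]; tauto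

lemma extend (C : SimpleGraph V) {a b c v : V} (hab : C.Adj a b) (hac : C.Adj a c)
    (hbc : C.Adj b c) (hva : C.Adj v a) (hvb : v ≠ b) (hvc : v ≠ c) :
    ∃ s : Finset V, a ∈ s ∧ b ∈ s ∧ c ∈ s ∧
      (Nonempty (pawGraph ≃g C.induce (s : Set V)) ∨
       Nonempty (diamondGraph ≃g C.induce (s : Set V)) ∨
       Nonempty ((⊤ : SimpleGraph (Fin 4)) ≃g C.induce (s : Set V))) := by
  classical
  have hAB := hab.ne
  have hAC := hac.ne
  have hBC := hbc.ne
  have hAV := hva.ne.symm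
  have hBV : b ≠ v := hvb.symm
  have hCV : c ≠ v := hvc.symm
  have hav : C.Adj a v := hva.symm
  by_cases hvb' : C.Adj v b <;> by_cases hvc' : C.Adj v c
  · refine ⟨{a, b, c, v}, by simp, by simp, by simp, Or.inr (Or.inr ?_)⟩
    have hbv' : C.Adj b v := hvb'.symm
    have hcv' : C.Adj c v := hvc'.symm
    refine iso_of_map _ ![a, b, c, v] (inj4 hAB hAC hAV hBC hBV hCV) _ range4 ?_
    intro i j
    fin_cases i <;> fin_cases j <;>
      simp_all [SimpleGraph.top_adj, hab.symm, hac.symm, hbc.symm]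
  · refine ⟨{a, b, c, v}, by simp, by simp, by simp, Or.inr (Or.inl ?_)⟩
    have hbv' : C.Adj b v := hvb'.symm
    have hcv' : ¬ C.Adj c v := fun h => hvc' h.symm
    refine iso_of_map _ ![a, b, c, v] (inj4 hAB hAC hAV hBC hBV hCV) _ range4 ?_
    intro i j
    fin_cases i <;> fin_cases j <;>
      simp_all [diamondGraph, SimpleGraph.fromRel_adj, hab.symm, hac.symm, hbc.symm]
  · refine ⟨{a, b, c, v}, by simp, by simp, by simp, Or.inr (Or.inl ?_)⟩
    have hcv' : C.Adj c v := hvc'.symm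
    have hbv' : ¬ C.Adj b v := fun h => hvb' h.symm
    have hr : (({a, b, c, v} : Finset V) : Set V) = Set.range ![a, c, b, v] := by
      rw [Finset.insert_comm b c]; exact range4
    refine iso_of_map _ ![a, c, b, v] (inj4 hAC hAB hAV hBC.symm hCV hBV) _ hr ?_
    intro i j
    fin_cases i <;> fin_cases j <;>
      simp_all [diamondGraph, SimpleGraph.fromRel_adj, hab.symm, hac.symm, hbc.symm]
  · refine ⟨{a, b, c, v}, by simp, by simp, by simp, Or.inl ?_⟩
    have hbv' : ¬ C.Adj b v := fun h => hvb' h.symm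
    have hcv' : ¬ C.Adj c v := fun h => hvc' h.symm
    refine iso_of_map _ ![a, b, c, v] (inj4 hAB hAC hAV hBC hBV hCV) _ range4 ?_
    intro i j
    fin_cases i <;> fin_cases j <;>
      simp_all [pawGraph, SimpleGraph.fromRel_adj, hab.symm, hac.symm, hbc.symm]

lemma exists_nbr (hconn : C.Connected) {t : Finset V} (hne : t.Nonempty)
    (hnu : ∃ u, u ∉ t) : ∃ v ∉ t, ∃ a ∈ t, C.Adj v a := by
  obtain ⟨u, hu⟩ := hnu
  obtain ⟨a, ha⟩ := hne
  obtain ⟨p⟩ := hconn a u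
  obtain ⟨d, _, hd1, hd2⟩ := p.exists_boundary_dart (↑t) ha hu
  exact ⟨d.toProd.2, hd2, d.toProd.1, hd1, d.adj.symm⟩

lemma indCount_eq {n : ℕ} [Fintype V] (H : SimpleGraph (Fin n)) (C : SimpleGraph V)
    [DecidablePred fun s : Finset V => Nonempty (H ≃g C.induce (s : Set V))] :
    indCount H C =
      (Finset.univ.filter (fun s : Finset V => Nonempty (H ≃g C.induce (s : Set V)))).card := by
  rw [indCount, Nat.card_eq_fintype_card, Fintype.card_subtype]

end Stmt7Aux

open Stmt7Aux Finset in
/-- In a connected graph with at least 4 vertices,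
`#Ind(K₃, C) ≤ #Ind(Paw, C) + 2·#Ind(Diamond, C) + 4·#Ind(K₄, C)`. -/
theorem stmt7 {V : Type*} [Fintype V] (C : SimpleGraph V) (hconn : C.Connected)
    (h4 : 4 ≤ Fintype.card V) :
    indCount (⊤ : SimpleGraph (Fin 3)) C ≤
      indCount pawGraph C + 2 * indCount diamondGraph C
        + 4 * indCount (⊤ : SimpleGraph (Fin 4)) C := by
  classical
  set Ppaw := fun s : Finset V => Nonempty (pawGraph ≃g C.induce (s : Set V)) with hPpaw
  set Pdia := fun s : Finset V => Nonempty (diamondGraph ≃g C.induce (s : Set V)) with hPdia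
  set PK4 := fun s : Finset V =>
    Nonempty ((⊤ : SimpleGraph (Fin 4)) ≃g C.induce (s : Set V)) with hPK4
  set P3 := fun s : Finset V =>
    Nonempty ((⊤ : SimpleGraph (Fin 3)) ≃g C.induce (s : Set V)) with hP3
  set T := Finset.univ.filter P3 with hT
  have E3 : indCount (⊤ : SimpleGraph (Fin 3)) C = T.card := indCount_eq _ _
  have Epaw : indCount pawGraph C = (Finset.univ.filter Ppaw).card := indCount_eq _ _
  have Edia : indCount diamondGraph C = (Finset.univ.filter Pdia).card := indCount_eq _ _
  have EK4 : indCount (⊤ : SimpleGraph (Fin 4)) C = (Finset.univ.filter PK4).card :=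
    indCount_eq _ _
  rw [E3, Epaw, Edia, EK4]
  set B := Finset.univ.filter (fun s => Ppaw s ∨ Pdia s ∨ PK4 s) with hB
  -- extension choice
  have hext : ∀ t : Finset V, ∃ s : Finset V, t ∈ T → (t ⊆ s ∧ (Ppaw s ∨ Pdia s ∨ PK4 s)) := by
    intro t
    by_cases ht : t ∈ T
    · have htri : isTri C t := isTri_of_iso (Finset.mem_filter.mp ht).2
      obtain ⟨x, y, z, hxy, hxz, hyz, rfl⟩ := Finset.card_eq_three.mp htri.1
      have hxy' : C.Adj x y := htri.2 _ (by simp) _ (by simp) hxy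
      have hxz' : C.Adj x z := htri.2 _ (by simp) _ (by simp) hxz
      have hyz' : C.Adj y z := htri.2 _ (by simp) _ (by simp) hyz
      have hnu : ∃ u, u ∉ ({x, y, z} : Finset V) := by
        by_contra h
        push_neg at h
        have hsub : (Finset.univ : Finset V) ⊆ {x, y, z} := fun u _ => h u
        have hcard := Finset.card_le_card hsub
        rw [Finset.card_univ] at hcard
        have h3 : ({x, y, z} : Finset V).card = 3 := htri.1
        omega
      obtain ⟨v, hv, w, hw, hadj⟩ := exists_nbr hconn ⟨x, by simp⟩ hnu
      simp only [Finset.mem_insert, Finset.mem_singleton] at hw hv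
      push_neg at hv
      obtain ⟨hv1, hv2, hv3⟩ := hv
      rcases hw with rfl | rfl | rfl
      · obtain ⟨s, hs1, hs2, hs3, hs4⟩ := extend C hxy' hxz' hyz' hadj hv2 hv3
        exact ⟨s, fun _ => ⟨by simp [Finset.insert_subset_iff, hs1, hs2, hs3], hs4⟩⟩
      · obtain ⟨s, hs1, hs2, hs3, hs4⟩ := extend C hxy'.symm hyz' hxz' hadj hv1 hv3
        exact ⟨s, fun _ => ⟨by simp [Finset.insert_subset_iff, hs1, hs2, hs3], hs4⟩⟩
      · obtain ⟨s, hs1, hs2, hs3, hs4⟩ := extend C hxz'.symm hyz'.symm hxy' hadj hv1 hv2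
        exact ⟨s, fun _ => ⟨by simp [Finset.insert_subset_iff, hs1, hs2, hs3], hs4⟩⟩
    · exact ⟨∅, fun h => absurd h ht⟩
  choose F hF using hext
  have hmap : ∀ t ∈ T, F t ∈ B := fun t ht =>
    Finset.mem_filter.mpr ⟨Finset.mem_univ _, (hF t ht).2⟩
  have hTcard : T.card = ∑ s ∈ B, (T.filter (fun t => F t = s)).card :=
    Finset.card_eq_sum_card_fiberwise hmap
  have hfiber : ∀ s ∈ B, (T.filter (fun t => F t = s)).card ≤
      (if Ppaw s then 1 else if Pdia s then 2 else 4) := by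
    intro s hs
    have hsub : T.filter (fun t => F t = s) ⊆ s.powerset.filter (isTri C) := by
      intro t ht
      rw [Finset.mem_filter] at ht
      obtain ⟨ht1, ht2⟩ := ht
      rw [Finset.mem_filter, Finset.mem_powerset]
      exact ⟨ht2 ▸ (hF t ht1).1, isTri_of_iso (Finset.mem_filter.mp ht1).2⟩
    have hle := Finset.card_le_card hsub
    by_cases h1 : Ppaw s
    · obtain ⟨e⟩ := id h1
      have := tri_count_le e (k := 1) (le_of_eq (by decide))
      rw [if_pos h1]
      exact hle.trans this
    by_cases h2 : Pdia s
    · obtain ⟨e⟩ := id h2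
      have := tri_count_le e (k := 2) (le_of_eq (by decide))
      rw [if_neg h1, if_pos h2]
      exact hle.trans this
    · have hk4 : PK4 s := by
        rcases (Finset.mem_filter.mp hs).2 with h | h | h
        · exact absurd h h1
        · exact absurd h h2
        · exact h
      have hc4 : s.card = 4 := card_of_iso hk4
      rw [if_neg h1, if_neg h2]
      refine hle.trans ?_
      calc (s.powerset.filter (isTri C)).card
          ≤ (s.powerset.filter (fun u => u.card = 3)).card := by
            apply Finset.card_le_card
            intro u hu
            rw [Finset.mem_filter] at hu ⊢
            exact ⟨hu.1, hu.2.1⟩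
        _ = 4 := by
            rw [← Finset.powersetCard_eq_filter, Finset.card_powersetCard, hc4]
            rfl
  have hmain : T.card ≤ ∑ s ∈ B, (if Ppaw s then 1 else if Pdia s then 2 else 4) := by
    rw [hTcard]; exact Finset.sum_le_sum hfiber
  refine hmain.trans ?_
  -- split the sum
  rw [← Finset.sum_filter_add_sum_filter_not B Ppaw]
  have e1 : ∑ s ∈ B.filter Ppaw, (if Ppaw s then 1 else if Pdia s then 2 else 4)
      = (B.filter Ppaw).card := by
    rw [Finset.sum_congr rfl (fun s hs => by
      rw [if_pos (Finset.mem_filter.mp hs).2]), Finset.sum_const, smul_eq_mul, mul_one]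
  have e2 : ∑ s ∈ B.filter (fun s => ¬ Ppaw s), (if Ppaw s then 1 else if Pdia s then 2 else 4)
      = ∑ s ∈ B.filter (fun s => ¬ Ppaw s), (if Pdia s then 2 else 4) :=
    Finset.sum_congr rfl (fun s hs => by rw [if_neg (Finset.mem_filter.mp hs).2])
  rw [e1, e2, ← Finset.sum_filter_add_sum_filter_not (B.filter (fun s => ¬ Ppaw s)) Pdia]
  have e3 : ∑ s ∈ (B.filter (fun s => ¬ Ppaw s)).filter Pdia, (if Pdia s then 2 else 4)
      = 2 * ((B.filter (fun s => ¬ Ppaw s)).filter Pdia).card := by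
    rw [Finset.sum_congr rfl (fun s hs => by
      rw [if_pos (Finset.mem_filter.mp hs).2]), Finset.sum_const, smul_eq_mul, mul_comm]
  have e4 : ∑ s ∈ (B.filter (fun s => ¬ Ppaw s)).filter (fun s => ¬ Pdia s),
      (if Pdia s then 2 else 4)
      = 4 * ((B.filter (fun s => ¬ Ppaw s)).filter (fun s => ¬ Pdia s)).card := by
    rw [Finset.sum_congr rfl (fun s hs => by
      rw [if_neg (Finset.mem_filter.mp hs).2]), Finset.sum_const, smul_eq_mul, mul_comm]
  rw [e3, e4]
  have c1 : (B.filter Ppaw).card ≤ (Finset.univ.filter Ppaw).card :=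
    Finset.card_le_card (Finset.filter_subset_filter _ (Finset.subset_univ B))
  have c2 : ((B.filter (fun s => ¬ Ppaw s)).filter Pdia).card
      ≤ (Finset.univ.filter Pdia).card := by
    apply Finset.card_le_card
    intro s hs
    rw [Finset.mem_filter] at hs ⊢
    exact ⟨Finset.mem_univ _, hs.2⟩
  have c3 : ((B.filter (fun s => ¬ Ppaw s)).filter (fun s => ¬ Pdia s)).card
      ≤ (Finset.univ.filter PK4).card := by
    apply Finset.card_le_card
    intro s hs
    rw [Finset.mem_filter, Finset.mem_filter, Finset.mem_filter] at hs
    rcases hs.1.1.2 with h | h | h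
    · exact absurd h hs.1.2
    · exact absurd h hs.2
    · exact Finset.mem_filter.mpr ⟨Finset.mem_univ _, h⟩
  omega
end

section
/- In a locally small, finitely M-well-powered category C with a proper (E, M)-factorization system, every morphism f : a → a belonging to M is an isomorphism. -/
open CategoryTheory

universe u v

/-- The `M`-subobjects of `b`: morphisms into `b` belonging to `M`, identified up to
precomposition with an isomorphism of the domain. -/
def MSubClasses {C : Type u} [Category.{v} C] (M : MorphismProperty C) (b : C) :=
  Quot (fun (p q : Σ a : C, {f : a ⟶ b // M f}) =>
    ∃ e : p.1 ≅ q.1, e.hom ≫ q.2.1 = p.2.1)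

/-- A mono followed by something, composing to an iso with mono second factor, is an iso. -/
lemma aux_iso_of_comp_iso {C : Type u} [Category.{v} C] {X Y Z : C}
    (f : X ⟶ Y) (g : Y ⟶ Z) (hg : Mono g) (h : IsIso (f ≫ g)) : IsIso f := by
  haveI := hg
  refine ⟨g ≫ inv (f ≫ g), ?_, ?_⟩
  · rw [← Category.assoc, IsIso.hom_inv_id]
  · have : (g ≫ inv (f ≫ g) ≫ f) ≫ g = 𝟙 Y ≫ g := by
      simp [Category.assoc]
    have := (cancel_mono g).mp this
    simpa [Category.assoc] using this

/-- In a (locally small) finitely `M`-well-powered category with a proper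
`(E, M)`-factorization system, every morphism `f : a ⟶ a` in `M` is an isomorphism. -/
theorem stmt12 {C : Type u} [Category.{v} C] (E M : MorphismProperty C)
    -- every morphism factors as a morphism in `E` followed by a morphism in `M`
    (fact : ∀ {X Y : C} (f : X ⟶ Y),
      ∃ (Z : C) (e : X ⟶ Z) (m : Z ⟶ Y), E e ∧ M m ∧ e ≫ m = f)
    -- uniqueness of the factorization up to a unique isomorphism
    (uniq : ∀ {X Y : C} (f : X ⟶ Y) (Z Z' : C) (e : X ⟶ Z) (m : Z ⟶ Y)
      (e' : X ⟶ Z') (m' : Z' ⟶ Y), E e → M m → E e' → M m' →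
      e ≫ m = f → e' ≫ m' = f →
      ∃! g : Z ≅ Z', e ≫ g.hom = e' ∧ g.hom ≫ m' = m)
    -- `E` and `M` contain all isomorphisms and are closed under composition
    (hEiso : ∀ {X Y : C} (f : X ⟶ Y), IsIso f → E f)
    (hMiso : ∀ {X Y : C} (f : X ⟶ Y), IsIso f → M f)
    (hEcomp : ∀ {X Y Z : C} (f : X ⟶ Y) (g : Y ⟶ Z), E f → E g → E (f ≫ g))
    (hMcomp : ∀ {X Y Z : C} (f : X ⟶ Y) (g : Y ⟶ Z), M f → M g → M (f ≫ g))
    -- properness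
    (hEepi : ∀ {X Y : C} (f : X ⟶ Y), E f → Epi f)
    (hMmono : ∀ {X Y : C} (f : X ⟶ Y), M f → Mono f)
    -- finitely `M`-well-powered
    (hwp : ∀ b : C, Finite (MSubClasses M b))
    {a : C} (f : a ⟶ a) (hf : M f) : IsIso f := by
  -- powers of f
  let pow : ℕ → (a ⟶ a) := fun n => Nat.rec (𝟙 a) (fun _ g => g ≫ f) n
  have pow_succ : ∀ n, pow (n + 1) = pow n ≫ f := fun n => rfl
  have hMpow : ∀ n, M (pow n) := by
    intro n
    induction n with
    | zero =>
      have : IsIso (𝟙 a) := inferInstance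
      exact hMiso _ this
    | succ n ih => exact hMcomp _ _ ih hf
  have pow_add : ∀ k m, pow (k + m) = pow k ≫ pow m := by
    intro k m
    induction m with
    | zero => simp [pow]
    | succ m ih =>
      show pow (k + m) ≫ f = pow k ≫ (pow m ≫ f)
      rw [ih, Category.assoc]
  -- the relation on sigma-pairs is an equivalence
  set r : (Σ x : C, {g : x ⟶ a // M g}) → (Σ x : C, {g : x ⟶ a // M g}) → Prop :=
    fun p q => ∃ e : p.1 ≅ q.1, e.hom ≫ q.2.1 = p.2.1 with hr
  have hequiv : Equivalence r := by
    constructor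
    · intro p; exact ⟨Iso.refl _, by simp⟩
    · rintro p q ⟨e, he⟩
      exact ⟨e.symm, by rw [Iso.symm_hom, ← he, ← Category.assoc, Iso.inv_hom_id,
        Category.id_comp]⟩
    · rintro p q s ⟨e, he⟩ ⟨e', he'⟩
      exact ⟨e.trans e', by rw [Iso.trans_hom, Category.assoc, he', he]⟩
  -- finiteness: two distinct powers give the same subobject class
  haveI : Finite (Quot r) := hwp a
  have : ∃ m n : ℕ, m ≠ n ∧
      (Quot.mk r ⟨a, pow m, hMpow m⟩ : MSubClasses M a) = Quot.mk r ⟨a, pow n, hMpow n⟩ := by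
    obtain ⟨m, n, hne, h⟩ := Finite.exists_ne_map_eq_of_infinite
      (fun n : ℕ => (Quot.mk r ⟨a, pow n, hMpow n⟩ : MSubClasses M a))
    exact ⟨m, n, hne, h⟩
  obtain ⟨m, n, hne, h⟩ := this
  -- wlog m < n
  have key : ∀ m n : ℕ, m < n →
      (Quot.mk r ⟨a, pow m, hMpow m⟩ : MSubClasses M a) = Quot.mk r ⟨a, pow n, hMpow n⟩ →
      IsIso f := by
    intro m n hmn heq
    have hrel : r ⟨a, pow m, hMpow m⟩ ⟨a, pow n, hMpow n⟩ :=
      (hequiv.eqvGen_iff).mp (Quot.eqvGen_exact heq)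
    obtain ⟨e, he⟩ := hrel
    -- e.hom ≫ pow n = pow m
    set k := n - m with hk
    have hk1 : 1 ≤ k := by omega
    have hn : n = (k) + m := by omega
    haveI : Mono (pow m) := hMmono _ (hMpow m)
    have h1 : e.hom ≫ pow k = 𝟙 a := by
      have : (e.hom ≫ pow k) ≫ pow m = 𝟙 a ≫ pow m := by
        rw [Category.assoc, ← pow_add, ← hn, he, Category.id_comp]
      exact (hMmono _ (hMpow m)).right_cancellation _ _ this
    have hiso : IsIso (pow k) := by
      have : pow k = e.inv := by
        rw [← Category.id_comp (pow k), ← e.inv_hom_id, Category.assoc, h1,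
          Category.comp_id]
      rw [this]; infer_instance
    -- pow k = f ≫ pow j where k = 1 + j
    obtain ⟨j, hj⟩ : ∃ j, k = 1 + j := ⟨k - 1, by omega⟩
    have hsplit : pow k = f ≫ pow j := by
      rw [hj, pow_add]
      congr 1
      show 𝟙 a ≫ f = f
      simp
    rw [hsplit] at hiso
    exact aux_iso_of_comp_iso f (pow j) (hMmono _ (hMpow j)) hiso
  rcases lt_or_gt_of_ne hne with hlt | hgt
  · exact key m n hlt h
  · exact key n m hgt h.symm
end

section
/- The number of m-dimensional subspaces of an n-dimensional vector space over the finite field F_p equals the Gaussian binomial coefficient binom(n, m)_p = ∏_{i=0}^{m-1} (p^{n-i} − 1)/(p^{m-i} − 1). -/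
open Module Submodule

section aux

variable {K V : Type*} [Field K] [Fintype K] [AddCommGroup V] [Module K V]
  [FiniteDimensional K V]

/-- The fiber of the span map over a subspace `W` of dimension `m` is equivalent to the
set of linearly independent `m`-tuples in `W`. -/
noncomputable def fiberEquivAux (m : ℕ) (W : Submodule K V) (hW : finrank K W = m) :
    {s : {s : Fin m → V // LinearIndependent K s} //
        Submodule.span K (Set.range s.1) = W} ≃
    {t : Fin m → W // LinearIndependent K t} where
  toFun s := ⟨fun i => ⟨s.1.1 i, by
      exact (le_of_eq s.2) (Submodule.subset_span (Set.mem_range_self i))⟩,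
    LinearIndependent.of_comp W.subtype s.1.2⟩
  invFun t := ⟨⟨fun i => (t.1 i : V), t.2.map' W.subtype (Submodule.ker_subtype W)⟩, by
    have htop : Submodule.span K (Set.range t.1) = ⊤ :=
      t.2.span_eq_top_of_card_eq_finrank' (by simp [hW])
    calc Submodule.span K (Set.range fun i => ((t.1 i : V)))
        = Submodule.span K (W.subtype '' Set.range t.1) := by
          rw [← Set.range_comp]; rfl
      _ = (Submodule.span K (Set.range t.1)).map W.subtype := by
          rw [Submodule.span_image]
      _ = W := by rw [htop, Submodule.map_top, Submodule.range_subtype]⟩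
  left_inv s := Subtype.ext (Subtype.ext (funext fun i => rfl))
  right_inv t := Subtype.ext (funext fun i => rfl)

theorem card_subspaces_mul (m : ℕ) :
    Nat.card {W : Submodule K V // finrank K W = m} *
      ∏ i : Fin m, (Fintype.card K ^ m - Fintype.card K ^ i.val) =
    Nat.card {s : Fin m → V // LinearIndependent K s} := by
  classical
  have : Finite V := Module.finite_of_finite K
  let f : {s : Fin m → V // LinearIndependent K s} → {W : Submodule K V // finrank K W = m} :=
    fun s => ⟨Submodule.span K (Set.range s.1), by
      rw [finrank_span_eq_card s.2]; simp⟩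
  have hfib : ∀ W : {W : Submodule K V // finrank K W = m},
      Nat.card {s // f s = W} =
        ∏ i : Fin m, (Fintype.card K ^ m - Fintype.card K ^ i.val) := by
    intro W
    have he : {s // f s = W} ≃ {t : Fin m → W.1 // LinearIndependent K t} := by
      refine (Equiv.subtypeEquivRight ?_).trans (fiberEquivAux m W.1 W.2)
      intro s
      constructor
      · intro h; exact congrArg Subtype.val h
      · intro h; exact Subtype.ext h
    rw [Nat.card_congr he, card_linearIndependent (le_of_eq W.2.symm)]
    rw [W.2]
  have : Fintype V := Fintype.ofFinite V
  calc Nat.card {W : Submodule K V // finrank K W = m} *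
        ∏ i : Fin m, (Fintype.card K ^ m - Fintype.card K ^ i.val)
      = ∑ _W : {W : Submodule K V // finrank K W = m},
          ∏ i : Fin m, (Fintype.card K ^ m - Fintype.card K ^ i.val) := by
        rw [Finset.sum_const, Finset.card_univ, smul_eq_mul, Nat.card_eq_fintype_card]
    _ = ∑ W : {W : Submodule K V // finrank K W = m}, Nat.card {s // f s = W} :=
        Finset.sum_congr rfl fun W _ => (hfib W).symm
    _ = Fintype.card ((W : {W : Submodule K V // finrank K W = m}) × {s // f s = W}) := by
        rw [Fintype.card_sigma]
        exact Finset.sum_congr rfl fun W _ => Nat.card_eq_fintype_card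
    _ = Nat.card ((W : {W : Submodule K V // finrank K W = m}) × {s // f s = W}) :=
        Nat.card_eq_fintype_card.symm
    _ = Nat.card {s : Fin m → V // LinearIndependent K s} :=
        Nat.card_congr (Equiv.sigmaFiberEquiv f)

end aux

/-- The number of `m`-dimensional subspaces of an `n`-dimensional vector space over a
finite field with `p` elements is the Gaussian binomial coefficient
`∏_{i=0}^{m-1} (p^{n-i} − 1)/(p^{m-i} − 1)`. -/
theorem stmt14 (p : ℕ) (K : Type*) [Field K] [Fintype K] (hK : Fintype.card K = p)
    (V : Type*) [AddCommGroup V] [Module K V] [FiniteDimensional K V]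
    (n m : ℕ) (hn : Module.finrank K V = n) :
    (Nat.card {W : Submodule K V // Module.finrank K W = m} : ℚ) =
      ∏ i ∈ Finset.range m,
        (((p : ℚ) ^ ((n : ℤ) - (i : ℤ)) - 1) / ((p : ℚ) ^ ((m : ℤ) - (i : ℤ)) - 1)) := by
  have hp2 : 2 ≤ p := hK ▸ Fintype.one_lt_card
  have hp1 : (1 : ℚ) < (p : ℚ) := by exact_mod_cast hp2
  have hp0 : (p : ℚ) ≠ 0 := by positivity
  by_cases hmn : m ≤ n
  · -- main case
    have : Finite V := Module.finite_of_finite K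
    have key := card_subspaces_mul (K := K) (V := V) m
    rw [hK] at key
    have hLI : Nat.card {s : Fin m → V // LinearIndependent K s} =
        ∏ i : Fin m, (Fintype.card K ^ finrank K V - Fintype.card K ^ i.val) :=
      card_linearIndependent (by omega)
    rw [hLI, hK, hn] at key
    -- cast to ℚ
    have hcast : ∀ (a : ℕ) (i : ℕ), i < a →
        ((p ^ a - p ^ i : ℕ) : ℚ) = (p : ℚ) ^ a - (p : ℚ) ^ i := by
      intro a i hia
      have : p ^ i ≤ p ^ a := Nat.pow_le_pow_right (by omega) (by omega)
      push_cast [Nat.cast_sub this]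
      ring
    have hB : ∀ i ∈ Finset.range m, ((p : ℚ) ^ m - (p : ℚ) ^ i) ≠ 0 := by
      intro i hi
      have hi' := Finset.mem_range.mp hi
      have : (p : ℚ) ^ i < (p : ℚ) ^ m := by
        exact pow_lt_pow_right₀ hp1 hi'
      linarith
    have keyQ : (Nat.card {W : Submodule K V // Module.finrank K W = m} : ℚ) *
        ∏ i ∈ Finset.range m, ((p : ℚ) ^ m - (p : ℚ) ^ i) =
        ∏ i ∈ Finset.range m, ((p : ℚ) ^ n - (p : ℚ) ^ i) := by
      rw [Fin.prod_univ_eq_prod_range (fun i => p ^ m - p ^ i) m,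
        Fin.prod_univ_eq_prod_range (fun i => p ^ n - p ^ i) m] at key
      have := congrArg (Nat.cast (R := ℚ)) key
      push_cast at this
      calc (Nat.card {W : Submodule K V // Module.finrank K W = m} : ℚ) *
            ∏ i ∈ Finset.range m, ((p : ℚ) ^ m - (p : ℚ) ^ i)
          = (Nat.card {W : Submodule K V // Module.finrank K W = m} : ℚ) *
            ∏ i ∈ Finset.range m, ((p ^ m - p ^ i : ℕ) : ℚ) := by
            rw [Finset.prod_congr rfl fun i hi => (hcast m i (Finset.mem_range.mp hi)).symm]
        _ = ∏ i ∈ Finset.range m, ((p ^ n - p ^ i : ℕ) : ℚ) := this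
        _ = ∏ i ∈ Finset.range m, ((p : ℚ) ^ n - (p : ℚ) ^ i) := by
            refine Finset.prod_congr rfl fun i hi => hcast n i ?_
            exact lt_of_lt_of_le (Finset.mem_range.mp hi) hmn
    have hterm : ∀ i ∈ Finset.range m,
        (((p : ℚ) ^ ((n : ℤ) - (i : ℤ)) - 1) / ((p : ℚ) ^ ((m : ℤ) - (i : ℤ)) - 1)) =
        ((p : ℚ) ^ n - (p : ℚ) ^ i) / ((p : ℚ) ^ m - (p : ℚ) ^ i) := by
      intro i hi
      have hi' := Finset.mem_range.mp hi
      have hpi : ((p : ℚ) ^ i) ≠ 0 := by positivity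
      rw [zpow_sub₀ hp0, zpow_sub₀ hp0, zpow_natCast, zpow_natCast, zpow_natCast,
        div_sub_one hpi, div_sub_one hpi, div_div_div_cancel_right₀]
      exact hpi
    rw [Finset.prod_congr rfl hterm, Finset.prod_div_distrib,
      eq_div_iff (Finset.prod_ne_zero_iff.mpr hB), keyQ]
  · -- m > n : no subspaces of dimension m, and RHS has a zero factor
    have hempty : IsEmpty {W : Submodule K V // Module.finrank K W = m} := by
      constructor
      intro W
      have : finrank K W.1 ≤ finrank K V := Submodule.finrank_le W.1
      omega
    rw [Nat.card_of_isEmpty, Nat.cast_zero]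
    symm
    apply Finset.prod_eq_zero (Finset.mem_range.mpr (by omega : n < m))
    simp
end

section
/- Let X be the canonical n-parameter set A^n over a finite alphabet A, and let Y be an m-parameter set. Then the number of m-parameter subsets of A^n equals the number of partitions of the set A ⊔ {1, …, n} into |A| + m non-empty blocks such that the |A| elements of A lie in pairwise distinct blocks (i.e., the |A|-Stirling number of the second kind with parameters |A|+n and |A|+m). -/
/-- `S` is an `m`-parameter subset of `A^n`: it is determined by assigning each
coordinate either a constant from `A` or one of `m` parameter labels, with every label
used at least once; the set consists of all points obtained by substituting alphabet
elements for the labels (equal labels receiving equal values). -/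
def IsParamSubset (A : Type*) (n m : ℕ) (S : Set (Fin n → A)) : Prop :=
  ∃ c : Fin n → A ⊕ Fin m,
    (∀ j : Fin m, ∃ i : Fin n, c i = Sum.inr j) ∧
      S = {x | ∃ g : Fin m → A, ∀ i, x i = Sum.elim (fun a => a) g (c i)}

namespace Stmt16Aux

open Function

variable {A : Type*} [Fintype A] [DecidableEq A] {n m : ℕ}

/-- The map `A ⊕ Fin n → A ⊕ Fin m` induced by a coordinate assignment `c`. -/
def fc (c : Fin n → A ⊕ Fin m) : A ⊕ Fin n → A ⊕ Fin m := Sum.elim Sum.inl c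

/-- The parameter set determined by `c`. -/
def pset (c : Fin n → A ⊕ Fin m) : Set (Fin n → A) :=
  {x | ∃ g : Fin m → A, ∀ i, x i = Sum.elim (fun a => a) g (c i)}

lemma mem_pset (c : Fin n → A ⊕ Fin m) (g : Fin m → A) :
    (fun i => Sum.elim (fun a => a) g (c i)) ∈ pset c := ⟨g, fun _ => rfl⟩

lemma key1 (hA : 2 ≤ Fintype.card A) (c : Fin n → A ⊕ Fin m) (i : Fin n) (a : A) :
    (∀ p ∈ pset c, p i = a) ↔ c i = Sum.inl a := by
  have hne : Nonempty A := Fintype.card_pos_iff.mp (by omega)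
  constructor
  · intro h
    obtain ⟨a₀⟩ := hne
    cases hci : c i with
    | inl b =>
      have hb := h _ (mem_pset c (fun _ => a₀))
      simp only [hci, Sum.elim_inl] at hb
      rw [hb]
    | inr j =>
      obtain ⟨a', ha'⟩ := Fintype.exists_ne_of_one_lt_card (by omega) a
      have hb := h _ (mem_pset c (fun _ => a'))
      simp only [hci, Sum.elim_inr] at hb
      exact absurd hb ha'
  · rintro h p ⟨g, hg⟩
    rw [hg i, h]
    rfl

lemma key2 (hA : 2 ≤ Fintype.card A) (c : Fin n → A ⊕ Fin m) (i i' : Fin n) :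
    (∀ p ∈ pset c, p i = p i') ↔ c i = c i' := by
  have hne : Nonempty A := Fintype.card_pos_iff.mp (by omega)
  obtain ⟨a₀⟩ := hne
  constructor
  · intro h
    cases hci : c i with
    | inl a =>
      cases hci' : c i' with
      | inl b =>
        have hb := h _ (mem_pset c (fun _ => a₀))
        simp only [hci, hci', Sum.elim_inl] at hb
        rw [hb]
      | inr j =>
        obtain ⟨a', ha'⟩ := Fintype.exists_ne_of_one_lt_card (by omega) a
        have hb := h _ (mem_pset c (fun _ => a'))
        simp only [hci, hci', Sum.elim_inl, Sum.elim_inr] at hb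
        exact absurd hb.symm ha'
    | inr j =>
      cases hci' : c i' with
      | inl b =>
        obtain ⟨a', ha'⟩ := Fintype.exists_ne_of_one_lt_card (by omega) b
        have hb := h _ (mem_pset c (fun _ => a'))
        simp only [hci, hci', Sum.elim_inl, Sum.elim_inr] at hb
        exact absurd hb ha'
      | inr j' =>
        by_cases hjj : j = j'
        · rw [hjj]
        · obtain ⟨b₀, hb₀⟩ := Fintype.exists_ne_of_one_lt_card (by omega) a₀
          classical
          have hb := h _ (mem_pset c (fun k => if k = j then a₀ else b₀))
          simp only [hci, hci', Sum.elim_inr, if_pos rfl, if_neg (Ne.symm hjj)] at hb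
          exact absurd hb.symm hb₀
  · rintro h p ⟨g, hg⟩
    rw [hg i, hg i', h]

/-- The intrinsic relation on `A ⊕ Fin n` determined by a subset `S`. -/
def irel (S : Set (Fin n → A)) : A ⊕ Fin n → A ⊕ Fin n → Prop
  | Sum.inl a, Sum.inl b => a = b
  | Sum.inl a, Sum.inr i => ∀ p ∈ S, p i = a
  | Sum.inr i, Sum.inl a => ∀ p ∈ S, p i = a
  | Sum.inr i, Sum.inr i' => ∀ p ∈ S, p i = p i'

lemma ker_iff (hA : 2 ≤ Fintype.card A) (c : Fin n → A ⊕ Fin m) (x y : A ⊕ Fin n) :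
    (Setoid.ker (fc c)).r x y ↔ irel (pset c) x y := by
  have hdef : ∀ x y : A ⊕ Fin n, (Setoid.ker (fc c)).r x y ↔ fc c x = fc c y :=
    fun _ _ => Iff.rfl
  cases x with
  | inl a =>
    cases y with
    | inl b => rw [hdef]; simp [fc, irel]
    | inr i => rw [hdef]; simp only [fc, Sum.elim_inl, Sum.elim_inr, irel]
               rw [key1 hA c i a, eq_comm]
  | inr i =>
    cases y with
    | inl a => rw [hdef]; simp only [fc, Sum.elim_inl, Sum.elim_inr, irel]
               rw [key1 hA c i a]
    | inr i' => rw [hdef]; simp only [fc, Sum.elim_inr, irel]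
                rw [key2 hA c i i']


/-- The set recovered from a setoid. -/
def rset (s : Setoid (A ⊕ Fin n)) : Set (Fin n → A) :=
  {x | (∀ i a, s.r (Sum.inr i) (Sum.inl a) → x i = a) ∧
    ∀ i i', s.r (Sum.inr i) (Sum.inr i') → x i = x i'}

lemma pset_eq_rset (c : Fin n → A ⊕ Fin m) (hc : ∀ j, ∃ i, c i = Sum.inr j) :
    pset c = rset (Setoid.ker (fc c)) := by
  classical
  have hker : ∀ x y : A ⊕ Fin n, (Setoid.ker (fc c)).r x y ↔ fc c x = fc c y :=
    fun _ _ => Iff.rfl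
  ext x
  simp only [pset, rset, Set.mem_setOf_eq, hker, fc, Sum.elim_inl, Sum.elim_inr]
  constructor
  · rintro ⟨g, hg⟩
    constructor
    · intro i a h; rw [hg i, h]; rfl
    · intro i i' h; rw [hg i, hg i', h]
  · rintro ⟨h1, h2⟩
    refine ⟨fun j => x (hc j).choose, fun i => ?_⟩
    cases hci : c i with
    | inl a => simpa using h1 i a hci
    | inr j =>
      simp only [Sum.elim_inr]
      exact h2 i (hc j).choose (by rw [hci, (hc j).choose_spec])

lemma ker_conds (c : Fin n → A ⊕ Fin m) (hc : ∀ j, ∃ i, c i = Sum.inr j) :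
    Nat.card (Quotient (Setoid.ker (fc c))) = Fintype.card A + m ∧
      ∀ a b : A, (Setoid.ker (fc c)).r (Sum.inl a) (Sum.inl b) → a = b := by
  constructor
  · have hsurj : Surjective (fc c) := by
      rintro (a | j)
      · exact ⟨Sum.inl a, rfl⟩
      · obtain ⟨i, hi⟩ := hc j; exact ⟨Sum.inr i, hi⟩
    rw [Nat.card_congr (Setoid.quotientKerEquivOfSurjective _ hsurj), Nat.card_sum]
    simp [Nat.card_eq_fintype_card]
  · intro a b h
    exact Sum.inl_injective h

lemma surj_core (s : Setoid (A ⊕ Fin n))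
    (hcard : Nat.card (Quotient s) = Fintype.card A + m)
    (hinj : ∀ a b : A, s.r (Sum.inl a) (Sum.inl b) → a = b) :
    ∃ c : Fin n → A ⊕ Fin m, (∀ j, ∃ i, c i = Sum.inr j) ∧ Setoid.ker (fc c) = s := by
  classical
  haveI : Fintype (Quotient s) := Fintype.ofFinite _
  set q : A ⊕ Fin n → Quotient s := Quotient.mk s with hq
  have hqsurj : Surjective q := Quotient.mk_surjective
  set J : A → Quotient s := fun a => q (Sum.inl a) with hJdef
  have hJ : Injective J := fun a b h => hinj a b (Quotient.exact h)
  have hcardT : Fintype.card {x : Quotient s // x ∉ Set.range J} = m := by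
    have h1 : Fintype.card {x : Quotient s // x ∈ Set.range J} = Fintype.card A := by
      rw [← Fintype.card_congr (Equiv.ofInjective J hJ)]
    have h2 : Fintype.card (Quotient s) = Fintype.card A + m := by
      rw [← Nat.card_eq_fintype_card, hcard]
    have := Fintype.card_subtype_compl (fun x : Quotient s => x ∈ Set.range J)
    omega
  set e : {x : Quotient s // x ∉ Set.range J} ≃ Fin m := Fintype.equivFinOfCardEq hcardT
    with he
  set c : Fin n → A ⊕ Fin m := fun i =>
    if h : q (Sum.inr i) ∈ Set.range J then Sum.inl h.choose
    else Sum.inr (e ⟨q (Sum.inr i), h⟩) with hc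
  -- the comparison map
  set F : A ⊕ Fin m → Quotient s := Sum.elim J (fun j => (e.symm j).val) with hF
  have hFinj : Injective F := by
    rintro (a | j) (b | j') h
    · simp only [hF, Sum.elim_inl] at h
      rw [hJ h]
    · simp only [hF, Sum.elim_inl, Sum.elim_inr] at h
      exact absurd ⟨a, h⟩ (e.symm j').prop
    · simp only [hF, Sum.elim_inl, Sum.elim_inr] at h
      exact absurd ⟨b, h.symm⟩ (e.symm j).prop
    · simp only [hF, Sum.elim_inr] at h
      rw [e.symm.injective (Subtype.ext h)]
  have hFfc : ∀ x, F (fc c x) = q x := by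
    rintro (a | i)
    · rfl
    · simp only [fc, Sum.elim_inr, hc]
      by_cases h : q (Sum.inr i) ∈ Set.range J
      · simp only [dif_pos h, hF, Sum.elim_inl]
        exact h.choose_spec
      · simp only [dif_neg h, hF, Sum.elim_inr, Equiv.symm_apply_apply]
  refine ⟨c, ?_, ?_⟩
  · intro j
    obtain ⟨y, hy⟩ := hqsurj (e.symm j).val
    cases y with
    | inl a => exact absurd ⟨a, hy⟩ (e.symm j).prop
    | inr i =>
      refine ⟨i, ?_⟩
      have hni : q (Sum.inr i) ∉ Set.range J := by rw [hy]; exact (e.symm j).prop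
      simp only [hc, dif_neg hni]
      congr 1
      have : (⟨q (Sum.inr i), hni⟩ : {x : Quotient s // x ∉ Set.range J}) = e.symm j :=
        Subtype.ext hy
      rw [this, Equiv.apply_symm_apply]
  · ext x y
    have h1 : (Setoid.ker (fc c)).r x y ↔ fc c x = fc c y := Iff.rfl
    have h2 : s.r x y ↔ q x = q y := ⟨fun h => Quotient.sound h, fun h => Quotient.exact h⟩
    show (Setoid.ker (fc c)).r x y ↔ s.r x y
    rw [h1, h2, ← hFfc, ← hFfc, hFinj.eq_iff]

end Stmt16Aux

/-- The number of `m`-parameter subsets of `A^n` equals the `|A|`-Stirling number of the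
second kind with parameters `|A| + n` and `|A| + m`: the number of partitions of
`A ⊔ {1, …, n}` (encoded as equivalence relations, i.e. `Setoid`s, on `A ⊕ Fin n`) into
`|A| + m` non-empty blocks such that the elements of `A` lie in pairwise distinct
blocks. -/
theorem stmt16 (A : Type*) [Fintype A] [DecidableEq A] (hA : 2 ≤ Fintype.card A)
    (n m : ℕ) :
    Nat.card {S : Set (Fin n → A) // IsParamSubset A n m S} =
      Nat.card {s : Setoid (A ⊕ Fin n) //
        Nat.card (Quotient s) = Fintype.card A + m ∧
          ∀ a b : A, s.r (Sum.inl a) (Sum.inl b) → a = b} := by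
  classical
  open Stmt16Aux in
  refine Nat.card_eq_of_bijective
    (fun S => ⟨Setoid.ker (fc S.2.choose),
      ker_conds S.2.choose S.2.choose_spec.1⟩) ⟨?_, ?_⟩
  · rintro ⟨S₁, h₁⟩ ⟨S₂, h₂⟩ h
    simp only [Subtype.mk.injEq] at h ⊢
    -- both chosen c's represent the same set via irel
    have e₁ : S₁ = pset h₁.choose := h₁.choose_spec.2
    have e₂ : S₂ = pset h₂.choose := h₂.choose_spec.2
    rw [e₁, e₂, pset_eq_rset _ h₁.choose_spec.1, pset_eq_rset _ h₂.choose_spec.1, h]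
  · rintro ⟨s, hcard, hinj⟩
    obtain ⟨c, hc1, hc2⟩ := surj_core s hcard hinj
    have hP : IsParamSubset A n m (pset c) := ⟨c, hc1, rfl⟩
    refine ⟨⟨pset c, hP⟩, ?_⟩
    simp only [Subtype.mk.injEq]
    rw [← hc2]
    apply Setoid.ext
    intro x y
    rw [ker_iff hA _ x y, ker_iff hA c x y]
    have : pset (hP.choose) = pset c := hP.choose_spec.2.symm
    rw [this]
end

section
/- Let φ be a ℚ-linear combination of induced-subgraph counting functions whose patterns H₁, …, H_s are pairwise non-isomorphic and all have no isolated vertices. If some coefficient α_j is negative, then there exists a finite graph W, which is an induced subgraph of the disjoint union of H₁, …, H_s and has no isolated vertices, such that φ(W) differs from Ψ(W) for every function Ψ that is a nonnegative-integer linear combination of induced-subgraph counts with patterns among the isolated-vertex-free induced subgraphs of that disjoint union. -/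
open SimpleGraph

/-- The disjoint union of a family of graphs. -/
def sigmaGraph {ι : Type*} {V : ι → Type*} (H : ∀ i, SimpleGraph (V i)) :
    SimpleGraph (Σ i, V i) where
  Adj a b := ∃ (i : ι) (x y : V i), (H i).Adj x y ∧ a = ⟨i, x⟩ ∧ b = ⟨i, y⟩
  symm := by
    constructor
    rintro a b ⟨i, x, y, h, rfl, rfl⟩
    exact ⟨i, y, x, h.symm, rfl, rfl⟩
  loopless := by
    constructor
    rintro a ⟨i, x, y, h, rfl, hxy⟩
    have : x = y := by simpa using hxy
    subst this
    exact (H i).loopless.irrefl x h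

attribute [local instance] Classical.propDecidable

noncomputable def induceInduceIso {V : Type*} (G : SimpleGraph V) (A : Set V) (B : Set A) :
    ((G.induce A).induce B) ≃g G.induce (Subtype.val '' B) where
  toEquiv := Equiv.Set.image Subtype.val B Subtype.val_injective
  map_rel_iff' := by
    intro a b
    simp [Equiv.Set.image, Equiv.Set.imageOfInjOn]

/-- Lift a subset `w ⊆ u` into the subtype of `u`. -/
def liftEmb {V : Type*} {u w : Finset V} (hw1 : w ⊆ u) : {x // x ∈ w} ↪ ((↑u : Set V) : Type _) :=
  Function.Embedding.codRestrict _ (Function.Embedding.subtype _) (fun x => hw1 x.2)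

lemma free_of_iso {γ δ : Type*} {A : SimpleGraph γ} {B : SimpleGraph δ} (e : A ≃g B)
    (h : ∀ v, ∃ w, A.Adj v w) : ∀ v, ∃ w, B.Adj v w := by
  intro v
  obtain ⟨w, hw⟩ := h (e.symm v)
  refine ⟨e w, ?_⟩
  have := e.map_rel_iff.2 hw
  simpa using this

lemma indCount_induce {V γ : Type*} [DecidableEq V] (P : SimpleGraph γ) (G : SimpleGraph V)
    (u : Finset V) :
    indCount P (G.induce (↑u : Set V)) =
      (u.powerset.filter (fun w : Finset V => Nonempty (P ≃g G.induce (↑w : Set V)))).card := by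
  classical
  have key : ∀ s : Finset ((↑u : Set V) : Type _),
      ((G.induce (↑u : Set V)).induce (↑s : Set (↑u : Set V))) ≃g
        G.induce (↑(s.map (Function.Embedding.subtype _)) : Set V) := by
    intro s
    have h : (↑(s.map (Function.Embedding.subtype _)) : Set V)
        = Subtype.val '' (↑s : Set (↑u : Set V)) := by
      rw [Finset.coe_map]; rfl
    rw [h]
    exact induceInduceIso G _ _
  let F : {s : Finset ((↑u : Set V) : Type _) //
        Nonempty (P ≃g (G.induce (↑u : Set V)).induce (↑s : Set (↑u : Set V)))} →
      {w : Finset V // w ∈ u.powerset.filter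
        fun w : Finset V => Nonempty (P ≃g G.induce (↑w : Set V))} :=
    fun s => ⟨s.1.map (Function.Embedding.subtype _), by
      simp only [Finset.mem_filter, Finset.mem_powerset]
      constructor
      · intro a ha
        obtain ⟨x, hx, rfl⟩ := Finset.mem_map.1 ha
        exact x.2
      · exact ⟨s.2.some.trans (key s.1)⟩⟩
  have hbij : Function.Bijective F := by
    constructor
    · intro a b hab
      apply Subtype.ext
      have := congrArg Subtype.val hab
      exact Finset.map_injective _ this
    · rintro ⟨w, hw⟩
      rw [Finset.mem_filter, Finset.mem_powerset] at hw
      obtain ⟨hw1, hw2⟩ := hw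
      have hmap : (w.attach.map (liftEmb hw1)).map (Function.Embedding.subtype _) = w := by
        ext a
        constructor
        · intro ha
          obtain ⟨x, hx, rfl⟩ := Finset.mem_map.1 ha
          obtain ⟨y, _, rfl⟩ := Finset.mem_map.1 hx
          exact y.2
        · intro ha
          exact Finset.mem_map.2 ⟨liftEmb hw1 ⟨a, ha⟩,
            Finset.mem_map.2 ⟨⟨a, ha⟩, Finset.mem_attach _ _, rfl⟩, rfl⟩
      refine ⟨⟨w.attach.map (liftEmb hw1), ?_⟩, ?_⟩
      · have k := key (w.attach.map (liftEmb hw1))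
        rw [hmap] at k
        exact ⟨hw2.some.trans k.symm⟩
      · exact Subtype.ext hmap
  rw [indCount, Nat.card_congr (Equiv.ofBijective F hbij), Nat.card_eq_finsetCard]

lemma sum_indCount {V : Type*} [DecidableEq V] (G : SimpleGraph V) {k : ℕ} {W : Fin k → Type*}
    (Q : ∀ j, SimpleGraph (W j)) (γc : Fin k → ℚ) (u : Finset V) :
    ∑ j, γc j * (indCount (Q j) (G.induce (↑u : Set V)) : ℚ) =
      ∑ w ∈ u.powerset, ∑ j, γc j *
        (if Nonempty (Q j ≃g G.induce (↑w : Set V)) then (1:ℚ) else 0) := by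
  rw [Finset.sum_comm]
  refine Finset.sum_congr rfl fun j _ => ?_
  rw [indCount_induce, Finset.card_filter, Nat.cast_sum, Finset.mul_sum]
  refine Finset.sum_congr rfl fun w _ => ?_
  congr 1
  split <;> simp

/-- Witness Theorem (graph case): let `φ = Σᵢ αᵢ · #Ind(Hᵢ, ·)` with pairwise
non-isomorphic patterns without isolated vertices, some coefficient being negative.
Let `G₀` be the disjoint union of the `Hᵢ`. Then for every function `Ψ` that is a
nonnegative-integer linear combination of induced-subgraph counts whose patterns are
isolated-vertex-free induced subgraphs of `G₀`, there is an isolated-vertex-free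
induced subgraph `W` of `G₀` with `Ψ(W) ≠ φ(W)`. -/
theorem stmt18 {s : ℕ} (n : Fin s → ℕ) (H : ∀ i, SimpleGraph (Fin (n i)))
    (α : Fin s → ℚ)
    (hni : ∀ i j, i ≠ j → IsEmpty (H i ≃g H j))
    (hpure : ∀ i, ∀ v, ∃ w, (H i).Adj v w)
    (hneg : ∃ j, α j < 0)
    (t : ℕ) (m : Fin t → ℕ) (P : ∀ j, SimpleGraph (Fin (m j))) (β : Fin t → ℕ)
    (hP : ∀ j, (∀ v, ∃ w, (P j).Adj v w) ∧
      ∃ u : Finset (Σ i, Fin (n i)),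
        Nonempty (P j ≃g (sigmaGraph H).induce (u : Set (Σ i, Fin (n i))))) :
    ∃ u : Finset (Σ i, Fin (n i)),
      (∀ v : (u : Set (Σ i, Fin (n i))),
        ∃ w, ((sigmaGraph H).induce (u : Set (Σ i, Fin (n i)))).Adj v w) ∧
      ∑ j, (β j : ℚ) *
          (indCount (P j) ((sigmaGraph H).induce (u : Set (Σ i, Fin (n i)))) : ℚ) ≠
        ∑ i, α i *
          (indCount (H i) ((sigmaGraph H).induce (u : Set (Σ i, Fin (n i)))) : ℚ) := by
  classical
  obtain ⟨j0, hj0⟩ := hneg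
  by_contra hcon
  push_neg at hcon
  set G : SimpleGraph (Σ i, Fin (n i)) := sigmaGraph H with hG
  set E : Finset (Σ i, Fin (n i)) → ℚ := fun w =>
    (∑ j, (β j : ℚ) * (if Nonempty (P j ≃g G.induce (↑w : Set (Σ i, Fin (n i)))) then (1:ℚ) else 0))
    - (∑ i, α i * (if Nonempty (H i ≃g G.induce (↑w : Set (Σ i, Fin (n i)))) then (1:ℚ) else 0))
    with hE
  have sumE : ∀ u : Finset (Σ i, Fin (n i)),
      (∀ v : (↑u : Set (Σ i, Fin (n i))), ∃ x, (G.induce (↑u : Set (Σ i, Fin (n i)))).Adj v x) →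
      ∑ w ∈ u.powerset, E w = 0 := by
    intro u hu
    have h1 := sum_indCount G P (fun j => (β j : ℚ)) u
    have h2 := sum_indCount G H α u
    have h3 := hcon u hu
    simp only [hE, Finset.sum_sub_distrib]
    rw [← h1, ← h2, h3, sub_self]
  have Evanish : ∀ w : Finset (Σ i, Fin (n i)),
      ¬(∀ v : (↑w : Set (Σ i, Fin (n i))), ∃ x, (G.induce (↑w : Set (Σ i, Fin (n i)))).Adj v x) →
      E w = 0 := by
    intro w hw
    simp only [hE]
    have hz1 : ∑ j, (β j : ℚ) *
        (if Nonempty (P j ≃g G.induce (↑w : Set (Σ i, Fin (n i)))) then (1:ℚ) else 0) = 0 :=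
      Finset.sum_eq_zero fun j _ => by
        rw [if_neg, mul_zero]
        rintro ⟨e⟩
        exact hw (free_of_iso e (hP j).1)
    have hz2 : ∑ i, α i *
        (if Nonempty (H i ≃g G.induce (↑w : Set (Σ i, Fin (n i)))) then (1:ℚ) else 0) = 0 :=
      Finset.sum_eq_zero fun i _ => by
        rw [if_neg, mul_zero]
        rintro ⟨e⟩
        exact hw (free_of_iso e (hpure i))
    rw [hz1, hz2, sub_self]
  have Ezero : ∀ w : Finset (Σ i, Fin (n i)),
      (∀ v : (↑w : Set (Σ i, Fin (n i))), ∃ x, (G.induce (↑w : Set (Σ i, Fin (n i)))).Adj v x) →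
      E w = 0 := by
    intro w
    induction w using Finset.strongInduction with
    | _ w ih =>
      intro hw
      have h0 := sumE w hw
      rw [← Finset.sum_erase_add _ _ (Finset.mem_powerset_self w)] at h0
      have hrest : ∀ w' ∈ w.powerset.erase w, E w' = 0 := by
        intro w' hw'
        rw [Finset.mem_erase, Finset.mem_powerset] at hw'
        by_cases hfree : ∀ v : (↑w' : Set (Σ i, Fin (n i))),
            ∃ x, (G.induce (↑w' : Set (Σ i, Fin (n i)))).Adj v x
        · exact ih w' (lt_of_le_of_ne hw'.2 hw'.1) hfree
        · exact Evanish w' hfree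
      rw [Finset.sum_eq_zero hrest, zero_add] at h0
      exact h0
  -- the witness: the `j0`-th component of the disjoint union
  set w₀ : Finset (Σ i, Fin (n i)) :=
    Finset.univ.map ⟨Sigma.mk j0, sigma_mk_injective⟩ with hw₀
  have hmem : ∀ v : Fin (n j0), (⟨j0, v⟩ : Σ i, Fin (n i)) ∈ w₀ := fun v =>
    Finset.mem_map.2 ⟨v, Finset.mem_univ _, rfl⟩
  let f : Fin (n j0) → ((↑w₀ : Set (Σ i, Fin (n i))) : Type _) := fun v => ⟨⟨j0, v⟩, hmem v⟩
  have hfbij : Function.Bijective f := by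
    constructor
    · intro a b hab
      have h1 : (⟨j0, a⟩ : Σ i, Fin (n i)) = ⟨j0, b⟩ := congrArg Subtype.val hab
      exact sigma_mk_injective (i := j0) h1
    · rintro ⟨x, hx⟩
      obtain ⟨v, _, hv⟩ := Finset.mem_map.1 hx
      exact ⟨v, Subtype.ext hv⟩
  have adj_iff : ∀ a b : Fin (n j0),
      G.Adj ⟨j0, a⟩ ⟨j0, b⟩ ↔ (H j0).Adj a b := by
    intro a b
    constructor
    · rintro ⟨i, x, y, hxy, h1, h2⟩
      obtain ⟨rfl, ha⟩ := Sigma.mk.inj_iff.1 h1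
      obtain ⟨-, hb⟩ := Sigma.mk.inj_iff.1 h2
      rw [heq_iff_eq] at ha hb
      subst ha; subst hb
      exact hxy
    · intro h
      exact ⟨j0, a, b, h, rfl, rfl⟩
  let iso0 : H j0 ≃g G.induce (↑w₀ : Set (Σ i, Fin (n i))) :=
    { toEquiv := Equiv.ofBijective f hfbij
      map_rel_iff' := by
        intro a b
        show (G.induce (↑w₀ : Set (Σ i, Fin (n i)))).Adj (f a) (f b) ↔ (H j0).Adj a b
        rw [comap_adj]
        exact adj_iff a b }
  have free0 : ∀ v : (↑w₀ : Set (Σ i, Fin (n i))),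
      ∃ x, (G.induce (↑w₀ : Set (Σ i, Fin (n i)))).Adj v x :=
    free_of_iso iso0 (hpure j0)
  have hE0 := Ezero w₀ free0
  simp only [hE] at hE0
  have hd : ∑ i, α i *
      (if Nonempty (H i ≃g G.induce (↑w₀ : Set (Σ i, Fin (n i)))) then (1:ℚ) else 0) = α j0 := by
    rw [Finset.sum_eq_single j0]
    · rw [if_pos ⟨iso0⟩, mul_one]
    · intro i _ hi
      rw [if_neg, mul_zero]
      rintro ⟨e⟩
      exact (hni i j0 hi).false (e.trans iso0.symm)
    · intro hj
      exact absurd (Finset.mem_univ _) hj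
  have hc : 0 ≤ ∑ j, (β j : ℚ) *
      (if Nonempty (P j ≃g G.induce (↑w₀ : Set (Σ i, Fin (n i)))) then (1:ℚ) else 0) :=
    Finset.sum_nonneg fun j _ => mul_nonneg (by positivity) (by split <;> norm_num)
  rw [hd] at hE0
  have : α j0 = ∑ j, (β j : ℚ) *
      (if Nonempty (P j ≃g G.induce (↑w₀ : Set (Σ i, Fin (n i)))) then (1:ℚ) else 0) := by
    linarith
  linarith
end
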